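/- If n = |N| is a prime number, then for any coalitions S, T ⊊ N with S, T nonempty, the vectors η^S and η^T are not orthogonal, i.e., ⟨η^S, η^T⟩ ≠ 0. -/
import Mathlib


open Finset

noncomputable def eta {N : Type*} [Fintype N] [DecidableEq N] (S : Finset N) : N → ℝ :=
  fun i => (if i ∈ S then (1 : ℝ) else 0) - (S.card : ℝ) / (Fintype.card N : ℝ)

lemma eta_inner {N : Type*} [Fintype N] [DecidableEq N] (S T : Finset N) :
    ∑ i, eta S i * eta T i =
      ((S ∩ T).card : ℝ) - (S.card : ℝ) * T.card / (Fintype.card N : ℝ) := by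
  classical
  have hn0 : (0:ℕ) < Fintype.card N ∨ Fintype.card N = 0 := by omega
  by_cases h : Fintype.card N = 0
  · have : IsEmpty N := Fintype.card_eq_zero_iff.mp h
    simp [eta, h, Finset.eq_empty_of_isEmpty S, Finset.eq_empty_of_isEmpty (S ∩ T)]
  have hn : (Fintype.card N : ℝ) ≠ 0 := by exact_mod_cast h
  unfold eta
  have : ∀ i : N, ((if i ∈ S then (1:ℝ) else 0) - S.card / Fintype.card N) *
      ((if i ∈ T then (1:ℝ) else 0) - T.card / Fintype.card N)
      = (if i ∈ S ∩ T then (1:ℝ) else 0)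
        - (if i ∈ S then (1:ℝ) else 0) * (T.card / Fintype.card N)
        - (if i ∈ T then (1:ℝ) else 0) * (S.card / Fintype.card N)
        + (S.card / Fintype.card N) * (T.card / Fintype.card N) := by
    intro i
    by_cases hs : i ∈ S <;> by_cases ht : i ∈ T <;>
      simp [Finset.mem_inter, hs, ht] <;> ring
  simp only [this]
  rw [Finset.sum_add_distrib, Finset.sum_sub_distrib, Finset.sum_sub_distrib]
  simp only [← Finset.sum_filter, Finset.filter_mem_eq_inter, Finset.univ_inter,
    Finset.sum_const, nsmul_eq_mul, mul_one]
  rw [← Finset.sum_mul, ← Finset.sum_mul, Finset.sum_boole, Finset.sum_boole]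
  simp only [Finset.filter_mem_eq_inter, Finset.univ_inter, Finset.card_univ]
  field_simp
  ring

theorem stmt2 {N : Type*} [Fintype N] [DecidableEq N]
    (hp : (Fintype.card N).Prime)
    (S T : Finset N) (hS : S.Nonempty) (hSU : S ≠ Finset.univ)
    (hT : T.Nonempty) (hTU : T ≠ Finset.univ) :
    ∑ i, eta S i * eta T i ≠ 0 := by
  classical
  rw [eta_inner]
  set n := Fintype.card N with hn
  have hn0 : (n:ℝ) ≠ 0 := by exact_mod_cast hp.pos.ne'
  intro h
  have h' : (n:ℝ) * ((S ∩ T).card : ℝ) = (S.card : ℝ) * T.card := by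
    field_simp at h
    linarith
  have hnat : n * (S ∩ T).card = S.card * T.card := by exact_mod_cast h'
  have hdvd : n ∣ S.card * T.card := ⟨(S ∩ T).card, hnat.symm⟩
  have hSlt : S.card < n := lt_of_le_of_ne (Finset.card_le_univ S |>.trans_eq (Finset.card_univ))
    (fun hh => hSU (Finset.eq_univ_of_card S (hh.trans Finset.card_univ.symm)))
  have hTlt : T.card < n := lt_of_le_of_ne (Finset.card_le_univ T |>.trans_eq (Finset.card_univ))
    (fun hh => hTU (Finset.eq_univ_of_card T (hh.trans Finset.card_univ.symm)))
  rcases (Nat.Prime.dvd_mul hp).mp hdvd with hd | hd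
  · exact absurd (Nat.le_of_dvd (Finset.card_pos.mpr hS) hd) (not_le.mpr hSlt)
  · exact absurd (Nat.le_of_dvd (Finset.card_pos.mpr hT) hd) (not_le.mpr hTlt)
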